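/- Let m ≥ 2 and n ≥ 1 be integers with m ≠ n and m ≠ n + 1. Then the Einstein system for D(m,n) admits at least two distinct real solutions (x₁, x₂, c) with x₁ ≠ 0 and x₂ ≠ 0. -/

import Mathlib

set_option maxHeartbeats 1600000

/-- For m ≥ 2, n ≥ 1 with m ≠ n and m ≠ n + 1, the Einstein system for D(m,n)
admits at least two distinct real solutions (x₁, x₂, c) with x₁ ≠ 0 and x₂ ≠ 0. -/
theorem einstein_Dmn_two_solutions (m n : ℕ) (hm : 2 ≤ m) (hn : 1 ≤ n)
    (hmn : m ≠ n) (hmn1 : m ≠ n + 1) :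
    ∃ s t : ℝ × ℝ × ℝ, s ≠ t ∧
      (∀ p ∈ ({s, t} : Set (ℝ × ℝ × ℝ)),
        p.1 ≠ 0 ∧ p.2.1 ≠ 0 ∧
        (1/4) * (((n : ℝ) / ((m : ℝ) - 1)) * p.1^2 - 1)
          = p.2.2 * (1 - (n : ℝ) / ((m : ℝ) - 1)) * p.1 ∧
        (1/4) * (((m : ℝ) / ((n : ℝ) + 1)) * p.2.1^2 - 1)
          = p.2.2 * (1 - (m : ℝ) / ((n : ℝ) + 1)) * p.2.1 ∧
        ((2 * (m : ℝ) - 1) / (4 * ((m : ℝ) - (n : ℝ) - 1))) * p.1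
          - ((2 * (n : ℝ) + 1) / (4 * ((m : ℝ) - (n : ℝ) - 1))) * p.2.1
          = 2 * p.2.2 + 1) := by
  have hM2 : (2 : ℝ) ≤ (m : ℝ) := by exact_mod_cast hm
  have hN1 : (1 : ℝ) ≤ (n : ℝ) := by exact_mod_cast hn
  have hMN : (m : ℝ) ≠ (n : ℝ) := by
    intro h; exact hmn (by exact_mod_cast h)
  have hMN1 : (m : ℝ) ≠ (n : ℝ) + 1 := by
    intro h; exact hmn1 (by exact_mod_cast h)
  set M : ℝ := (m : ℝ)
  set N : ℝ := (n : ℝ)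
  have hw : M - N - 1 ≠ 0 := fun h => hMN1 (by linarith)
  have hM1 : M - 1 ≠ 0 := by intro h; linarith
  have hNp1 : N + 1 ≠ 0 := by intro h; linarith
  have h2N1 : (2 : ℝ) * N + 1 ≠ 0 := by intro h; linarith
  have hMNne : M - N ≠ 0 := fun h => hMN (by linarith)
  -- key sign fact: (M-N)*(2M-2N-1) > 0
  have hsign : 0 < (M - N) * (2 * M - 2 * N - 1) := by
    rcases lt_or_gt_of_ne hmn with h | h
    · have : (m : ℝ) + 1 ≤ (n : ℝ) := by exact_mod_cast h
      nlinarith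
    · have : (n : ℝ) + 1 ≤ (m : ℝ) := by exact_mod_cast h
      nlinarith
  have hsq : 0 < (M - N) ^ 2 := by positivity
  have hM1sq : 0 < (M - 1) ^ 2 := by positivity
  -- the cubic whose root gives the second solution
  set f : ℝ → ℝ := fun x => (M - N) *
      ((8*M^3 - 8*M^2 - 16*M^2*N + 2*M + 12*M*N + 16*M*N^2 - 2*N - 8*N^2 - 8*N^3) * x^3
       + (-24*M^3 + 40*M^2 + 48*M^2*N - 14*M - 44*M*N - 32*M*N^2 + 6*N + 16*N^2 + 8*N^3) * x^2
       + (24*M^3 - 52*M^2 - 40*M^2*N + 32*M + 56*M*N + 16*M*N^2 - 4 - 16*N - 16*N^2) * x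
       + (-8*M^3 + 20*M^2 + 8*M^2*N - 16*M - 16*M*N + 4 + 8*N)) with hf
  have hcont : ContinuousOn f (Set.Icc (0:ℝ) 1) := by
    apply Continuous.continuousOn
    fun_prop
  have hf0 : f 0 < 0 := by
    have h0 : f 0 = -4 * (M - 1)^2 * ((M - N) * (2 * M - 2 * N - 1)) := by
      simp only [hf]; ring
    rw [h0]
    nlinarith [mul_pos hM1sq hsign]
  have hf1 : 0 < f 1 := by
    have h1 : f 1 = 4 * (M - N)^2 * (2 * N + 1) := by
      simp only [hf]; ring
    rw [h1]
    nlinarith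
  obtain ⟨r, hrmem, hfr⟩ := intermediate_value_Ioo (by norm_num : (0:ℝ) ≤ 1) hcont ⟨hf0, hf1⟩
  obtain ⟨hr0, hr1⟩ := hrmem
  have hrne : r ≠ 0 := ne_of_gt hr0
  have hrne1 : r ≠ 1 := ne_of_lt hr1
  -- the cubic equation satisfied by r
  have hcub : (8*M^3 - 8*M^2 - 16*M^2*N + 2*M + 12*M*N + 16*M*N^2 - 2*N - 8*N^2 - 8*N^3) * r^3
       + (-24*M^3 + 40*M^2 + 48*M^2*N - 14*M - 44*M*N - 32*M*N^2 + 6*N + 16*N^2 + 8*N^3) * r^2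
       + (24*M^3 - 52*M^2 - 40*M^2*N + 32*M + 56*M*N + 16*M*N^2 - 4 - 16*N - 16*N^2) * r
       + (-8*M^3 + 20*M^2 + 8*M^2*N - 16*M - 16*M*N + 4 + 8*N) = 0 := by
    have h := hfr
    simp only [hf] at h
    exact (mul_eq_zero.mp h).resolve_left hMNne
  -- define the second solution implicitly
  obtain ⟨x2, hx2⟩ : ∃ x2 : ℝ,
      (2*N + 1) * r * x2 = (2*M - 2*N - 1) * r^2 - 4*(M - N - 1)*r + 2*(M - 1) :=
    ⟨((2*M - 2*N - 1) * r^2 - 4*(M - N - 1)*r + 2*(M - 1)) / ((2*N + 1) * r), by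
      field_simp⟩
  obtain ⟨c, hc⟩ : ∃ c : ℝ,
      8*(M - N - 1) * c = (2*M - 1) * r - (2*N + 1) * x2 - 4*(M - N - 1) :=
    ⟨((2*M - 1) * r - (2*N + 1) * x2 - 4*(M - N - 1)) / (8*(M - N - 1)), by
      field_simp⟩
  -- the quartic identity: eq2 numerator vanishes
  have hq : ((2*N + 1) * r)^2 * ((2*M - 2*N - 1) * x2^2 + (2*M - 1) * r * x2
      - 4*(M - N - 1) * x2 - 2*(N + 1)) = 0 := by
    linear_combination ((2*M - 2*N - 1)*((2*N + 1)*r*x2 + (2*M - 2*N - 1)*r^2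
        - 4*(M - N - 1)*r + 2*(M - 1)) + (2*M - 1)*(2*N + 1)*r^2
        - 4*(M - N - 1)*(2*N + 1)*r) * hx2 + (r - 1) * hcub
  have hden : ((2*N + 1) * r)^2 ≠ 0 := by positivity
  have key2 : (2*M - 2*N - 1) * x2^2 + (2*M - 1) * r * x2
      - 4*(M - N - 1) * x2 - 2*(N + 1) = 0 :=
    (mul_eq_zero.mp hq).resolve_left hden
  have hx2ne : x2 ≠ 0 := by
    intro h
    rw [h] at key2
    nlinarith
  refine ⟨(1, 1, -1/4), (r, x2, c), ?_, ?_⟩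
  · intro h
    have : (1:ℝ) = r := congrArg Prod.fst h
    exact hrne1 this.symm
  · rintro p hp
    simp only [Set.mem_insert_iff, Set.mem_singleton_iff] at hp
    rcases hp with rfl | rfl
    · refine ⟨one_ne_zero, one_ne_zero, ?_, ?_, ?_⟩
      · dsimp only
        ring
      · dsimp only
        ring
      · dsimp only
        field_simp
        ring
    · refine ⟨hrne, hx2ne, ?_, ?_, ?_⟩
      · -- first Einstein equation
        dsimp only
        have key1 : N * r^2 - (M - 1) = 4 * c * (M - N - 1) * r := by
          linear_combination (-(r/2)) * hc + (1/2) * hx2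
        field_simp
        linear_combination key1
      · -- second Einstein equation
        dsimp only
        have key2' : M * x2^2 - (N + 1) = -(4 * c * (M - N - 1) * x2) := by
          linear_combination (1/2) * key2 + (x2/2) * hc
        field_simp
        linear_combination key2'
      · -- third equation
        dsimp only
        field_simp
        linear_combination -hc
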